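/- Let G be a pertinent group whose order is divisible by 4. Then the subgroup K generated by the three involutions of G is isomorphic to the Klein four-group ℤ/2 × ℤ/2; in particular the three involutions commute pairwise and the product of any two distinct involutions equals the third. -/
import Mathlib


/-- A finite group is *pertinent* if it has exactly three involutions and
they are pairwise conjugate. -/
def Pertinent (G : Type*) [Group G] : Prop :=
  Finite G ∧ {g : G | orderOf g = 2}.ncard = 3 ∧
    ∀ a b : G, orderOf a = 2 → orderOf b = 2 → IsConj a b

section Aux

variable {G : Type*} [Group G]

lemma aux_sq_eq_one {x : G} (hx : orderOf x = 2) : x * x = 1 := by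
  have h := pow_orderOf_eq_one x
  rwa [hx, pow_two] at h

lemma aux_ne_one {x : G} (hx : orderOf x = 2) : x ≠ 1 := by
  intro h; rw [h, orderOf_one] at hx; norm_num at hx

lemma aux_inv_eq {x : G} (hx : orderOf x = 2) : x⁻¹ = x :=
  inv_eq_of_mul_eq_one_right (aux_sq_eq_one hx)

lemma aux_order_two {x : G} (h1 : x * x = 1) (h0 : x ≠ 1) : orderOf x = 2 := by
  haveI : Fact (Nat.Prime 2) := ⟨Nat.prime_two⟩
  exact orderOf_eq_prime (by rwa [pow_two]) h0

lemma aux_mul_order_two {u v : G} (hu : orderOf u = 2) (hv : orderOf v = 2)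
    (huv : u ≠ v) (hcomm : u * v = v * u) : orderOf (u * v) = 2 := by
  apply aux_order_two
  · calc u * v * (u * v) = u * (v * u) * v := by group
    _ = u * (u * v) * v := by rw [hcomm]
    _ = (u * u) * (v * v) := by group
    _ = 1 := by rw [aux_sq_eq_one hu, aux_sq_eq_one hv, one_mul]
  · intro h
    exact huv ((eq_inv_of_mul_eq_one_left h).trans (aux_inv_eq hv))

/-- Key lemma: in a finite group with exactly three involutions whose order is
divisible by 4, any two involutions commute. -/
lemma aux_comm [Finite G] (hcard : {g : G | orderOf g = 2}.ncard = 3)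
    (h4 : 4 ∣ Nat.card G) :
    ∀ x y : G, orderOf x = 2 → orderOf y = 2 → x * y = y * x := by
  classical
  by_contra hcon
  push_neg at hcon
  obtain ⟨x, y, hx, hy, hxy⟩ := hcon
  -- Step 1: no two distinct involutions commute.
  have hnc : ∀ u v : G, orderOf u = 2 → orderOf v = 2 → u ≠ v → u * v ≠ v * u := by
    intro u v hu hv huv hcomm
    apply hxy
    have hu1 : u * u = 1 := aux_sq_eq_one hu
    have hv1 : v * v = 1 := aux_sq_eq_one hv
    have hw : orderOf (u * v) = 2 := aux_mul_order_two hu hv huv hcomm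
    have hwu : u * v ≠ u := fun h => aux_ne_one hv (by
      have := congrArg (fun z => u * z) h
      simpa [← mul_assoc, hu1] using this)
    have hwv : u * v ≠ v := fun h => aux_ne_one hu (by
      have := congrArg (fun z => z * v) h
      simpa [mul_assoc, hv1] using this)
    -- the set of involutions is exactly {u, v, u*v}
    have hsub : ({u, v, u * v} : Set G) ⊆ {g : G | orderOf g = 2} := by
      rintro z (rfl | rfl | rfl) <;> assumption
    have hScard : ({u, v, u * v} : Set G).ncard = 3 := by
      rw [Set.ncard_insert_of_notMem (by simp [huv, hwu.symm]) (Set.toFinite _),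
        Set.ncard_insert_of_notMem (by simp [hwv.symm]) (Set.toFinite _),
        Set.ncard_singleton]
    have hSeq : ({u, v, u * v} : Set G) = {g : G | orderOf g = 2} :=
      Set.eq_of_subset_of_ncard_le hsub (by rw [hcard, hScard]) (Set.toFinite _)
    have hx' : x ∈ ({u, v, u * v} : Set G) := by rw [hSeq]; exact hx
    have hy' : y ∈ ({u, v, u * v} : Set G) := by rw [hSeq]; exact hy
    have c3 : u * (u * v) = (u * v) * u := by
      rw [← mul_assoc, hu1, one_mul, hcomm, mul_assoc, hu1, mul_one]
    have c6 : v * (u * v) = (u * v) * v := by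
      rw [hcomm, ← mul_assoc, hv1, one_mul, ← hcomm, mul_assoc, hv1, mul_one]
    rcases hx' with rfl | rfl | rfl <;> rcases hy' with rfl | rfl | rfl
    · rfl
    · exact hcomm
    · exact c3
    · exact hcomm.symm
    · rfl
    · exact c6
    · exact c3.symm
    · exact c6.symm
    · rfl
  -- Step 2: counting argument.
  haveI : Fintype G := Fintype.ofFinite G
  set S : Set G := {g : G | orderOf g = 2} with hSdef
  have hmem : ∀ (g : G) (z : S), g * (z : G) * g⁻¹ ∈ S := by
    intro g z
    have h := (MulAut.conj g).orderOf_eq (z : G)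
    have hz : orderOf (z : G) = 2 := z.2
    simp only [MulAut.conj_apply] at h
    show orderOf (g * (z : G) * g⁻¹) = 2
    rw [h, hz]
  let act : G → S → S := fun g z => ⟨g * (z : G) * g⁻¹, hmem g z⟩
  have act_one : ∀ z, act 1 z = z := by
    intro z; apply Subtype.ext; simp [act]
  have act_mul : ∀ g h z, act (g * h) z = act g (act h z) := by
    intro g h z; apply Subtype.ext; simp [act, mul_assoc]
  let φ : G →* Equiv.Perm S :=
    { toFun := fun g =>
        { toFun := act g
          invFun := act g⁻¹
          left_inv := fun z => by rw [← act_mul, inv_mul_cancel, act_one]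
          right_inv := fun z => by rw [← act_mul, mul_inv_cancel, act_one] }
      map_one' := Equiv.ext fun z => act_one z
      map_mul' := fun g h => Equiv.ext fun z => act_mul g h z }
  have hker : ∀ g : G, g ∈ φ.ker → ∀ z : G, orderOf z = 2 → g * z = z * g := by
    intro g hg z hz
    have h1 : φ g ⟨z, hz⟩ = ⟨z, hz⟩ := by
      rw [MonoidHom.mem_ker.mp hg]; rfl
    have h2 : g * z * g⁻¹ = z := congrArg Subtype.val h1
    rw [mul_inv_eq_iff_eq_mul] at h2
    exact h2
  -- kernel has odd order
  have hodd : ¬ 2 ∣ Nat.card φ.ker := by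
    intro h2
    haveI : Fact (Nat.Prime 2) := ⟨Nat.prime_two⟩
    obtain ⟨t, ht⟩ := exists_prime_orderOf_dvd_card (G := φ.ker) 2
      (by rwa [← Nat.card_eq_fintype_card])
    have ht' : orderOf (t : G) = 2 := (Subgroup.orderOf_coe t).trans ht
    obtain ⟨s, hs, hst⟩ := Set.exists_ne_of_one_lt_ncard
      (s := S) (by rw [hcard]; norm_num) (t : G)
    exact hnc (t : G) s ht' hs (Ne.symm hst) (hker t t.2 s hs)
  -- quotient has order dividing 6
  have hquot : Nat.card (G ⧸ φ.ker) ∣ 6 := by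
    have e : (G ⧸ φ.ker) ≃* φ.range := QuotientGroup.quotientKerEquivRange φ
    rw [Nat.card_congr e.toEquiv]
    have hdvd : Nat.card φ.range ∣ Nat.card (Equiv.Perm S) :=
      Subgroup.card_subgroup_dvd_card _
    have hS3 : Nat.card S = 3 := by rw [Nat.card_coe_set_eq]; exact hcard
    have hperm : Nat.card (Equiv.Perm S) = 6 := by
      rw [Nat.card_eq_fintype_card, Fintype.card_perm,
        show Fintype.card S = 3 by rw [← Nat.card_eq_fintype_card]; exact hS3]
      rfl
    rwa [hperm] at hdvd
  have hGcard : Nat.card G = Nat.card (G ⧸ φ.ker) * Nat.card φ.ker :=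
    Subgroup.card_eq_card_quotient_mul_card_subgroup φ.ker
  have h2k : Nat.Coprime 2 (Nat.card φ.ker) :=
    (Nat.Prime.coprime_iff_not_dvd Nat.prime_two).mpr hodd
  have h4k : Nat.Coprime 4 (Nat.card φ.ker) := by
    rw [show (4 : ℕ) = 2 ^ 2 from rfl]
    exact Nat.Coprime.pow_left _ h2k
  have h4q : 4 ∣ Nat.card (G ⧸ φ.ker) :=
    h4k.dvd_of_dvd_mul_right (hGcard ▸ h4)
  have : (4 : ℕ) ∣ 6 := h4q.trans hquot
  norm_num at this

end Aux

theorem stmt_7 (G : Type*) [Group G] (hG : Pertinent G) (h4 : 4 ∣ Nat.card G) :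
    Nonempty (↥(Subgroup.closure {g : G | orderOf g = 2})
        ≃* (Multiplicative (ZMod 2) × Multiplicative (ZMod 2))) ∧
    (∀ a b : G, orderOf a = 2 → orderOf b = 2 → a * b = b * a) ∧
    (∀ a b c : G, orderOf a = 2 → orderOf b = 2 → orderOf c = 2 →
      a ≠ b → a ≠ c → b ≠ c → a * b = c) := by
  obtain ⟨hfin, hcard, _⟩ := hG
  haveI : Finite G := hfin
  set S : Set G := {g : G | orderOf g = 2} with hSdef
  have hcomm : ∀ x y : G, orderOf x = 2 → orderOf y = 2 → x * y = y * x :=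
    aux_comm hcard h4
  -- product of two distinct involutions is the third
  have hprod : ∀ a b c : G, orderOf a = 2 → orderOf b = 2 → orderOf c = 2 →
      a ≠ b → a ≠ c → b ≠ c → a * b = c := by
    intro a b c ha hb hc hab hac hbc
    have hw : orderOf (a * b) = 2 := aux_mul_order_two ha hb hab (hcomm a b ha hb)
    have hwa : a * b ≠ a := fun h => aux_ne_one hb (by
      have := congrArg (fun z => a * z) h
      simpa [← mul_assoc, aux_sq_eq_one ha] using this)
    have hwb : a * b ≠ b := fun h => aux_ne_one ha (by
      have := congrArg (fun z => z * b) h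
      simpa [mul_assoc, aux_sq_eq_one hb] using this)
    -- S has exactly 3 elements and contains a, b, c, a*b
    have hsub : ({a, b, c} : Set G) ⊆ S := by
      rintro z (rfl | rfl | rfl) <;> assumption
    have hScard : ({a, b, c} : Set G).ncard = 3 := by
      rw [Set.ncard_insert_of_notMem (by simp [hab, hac]) (Set.toFinite _),
        Set.ncard_insert_of_notMem (by simp [hbc]) (Set.toFinite _),
        Set.ncard_singleton]
    have hSeq : ({a, b, c} : Set G) = S :=
      Set.eq_of_subset_of_ncard_le hsub (by rw [hcard, hScard]) (Set.toFinite _)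
    have hmem : a * b ∈ ({a, b, c} : Set G) := by rw [hSeq]; exact hw
    rcases hmem with h | h | h
    · exact absurd h hwa
    · exact absurd h hwb
    · exact h
  refine ⟨?_, hcomm, hprod⟩
  -- construct the subgroup {1} ∪ S and show it equals the closure
  have hmul : ∀ x y : G, x ∈ insert 1 S → y ∈ insert 1 S → x * y ∈ insert 1 S := by
    intro x y hx hy
    rcases hx with rfl | hx
    · rwa [one_mul]
    rcases hy with rfl | hy
    · rw [mul_one]; exact Set.mem_insert_of_mem _ hx
    by_cases hxy : x = y
    · left; rw [hxy]; exact aux_sq_eq_one hy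
    · right
      exact aux_mul_order_two hx hy hxy (hcomm x y hx hy)
  let H : Subgroup G :=
    { carrier := insert 1 S
      one_mem' := Or.inl rfl
      mul_mem' := fun {x y} hx hy => hmul x y hx hy
      inv_mem' := by
        rintro x (rfl | hx)
        · left; exact inv_one
        · right; rw [aux_inv_eq hx]; exact hx }
  have hcl : Subgroup.closure S = H := by
    apply le_antisymm
    · exact (Subgroup.closure_le H).mpr (Set.subset_insert 1 S)
    · intro g hg
      rcases hg with rfl | hg
      · exact Subgroup.one_mem _
      · exact Subgroup.subset_closure hg
  -- cardinality of the closure is 4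
  have hone : (1 : G) ∉ S := fun h => by
    have : orderOf (1 : G) = 2 := h
    rw [orderOf_one] at this; norm_num at this
  have hHcard : Nat.card H = 4 := by
    have : Nat.card H = (insert 1 S).ncard := Nat.card_coe_set_eq _
    rw [this, Set.ncard_insert_of_notMem hone (Set.toFinite _), hcard]
  -- exponent of the closure is 2
  have hHexp : Monoid.exponent H = 2 := by
    have hnt : Nontrivial H := by
      have h2 : 1 < Nat.card H := by rw [hHcard]; norm_num
      exact Finite.one_lt_card_iff_nontrivial.mp h2
    rw [Monoid.exponent_eq_prime_iff Nat.prime_two]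
    intro g hg
    have hg1 : (g : G) ≠ 1 := fun h => hg (by ext; exact h)
    have hgS : (g : G) ∈ S := by
      rcases g.2 with h | h
      · exact absurd h hg1
      · exact h
    have : orderOf (g : G) = 2 := hgS
    rwa [Subgroup.orderOf_coe] at this
  haveI hK4 : IsKleinFour H := ⟨hHcard, hHexp⟩
  haveI : IsKleinFour (Multiplicative (ZMod 2) × Multiplicative (ZMod 2)) := by
    constructor
    · simp [Nat.card_prod, Nat.card_eq_fintype_card]
    · rw [Monoid.exponent_prod, Monoid.exponent_multiplicative, ZMod.exponent]
      exact Nat.lcm_self 2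
  rw [hcl]
  exact IsKleinFour.nonempty_mulEquiv
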